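/- Key inequality for monotonicity: for every j ∈ {1,…,N2}, v_{1,j}·d - v_j·m1 < 0, where v_{1,j}/v_j = 1 - (N1+j)/a1 and m1/d = E(N1,a1). Equivalently, (1 - (N1+j)/a1) < E(N1,a1) for all j ≥ 1. -/

import Mathlib

open Finset

noncomputable def ErlangB (N : ℕ) (a : ℝ) : ℝ :=
  (a ^ N / (Nat.factorial N : ℝ)) / (∑ j ∈ Finset.range (N + 1), a ^ j / (Nat.factorial j : ℝ))

noncomputable def coefM1 (N1 N2 : ℕ) (a1 a2 : ℝ) : ℝ :=
  a1 ^ N1 / (Nat.factorial N1 : ℝ) * ∑ j ∈ Finset.range (N2 + 1), a2 ^ j / (Nat.factorial j : ℝ)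

noncomputable def coefV1 (N1 N2 : ℕ) (a1 a2 : ℝ) (j : ℕ) : ℝ :=
  (1 - ((N1 : ℝ) + j) / a1) * (a1 ^ (N1 + j) / (Nat.factorial (N1 + j) : ℝ)) *
    ∑ i ∈ Finset.range (N2 - j + 1), a2 ^ i / (Nat.factorial i : ℝ)

noncomputable def coefD (N1 N2 : ℕ) (a1 a2 : ℝ) : ℝ :=
  (∑ i ∈ Finset.range (N1 + 1), a1 ^ i / (Nat.factorial i : ℝ)) *
    ∑ j ∈ Finset.range (N2 + 1), a2 ^ j / (Nat.factorial j : ℝ)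

noncomputable def coefV (N1 N2 : ℕ) (a1 a2 : ℝ) (j : ℕ) : ℝ :=
  (a1 ^ (N1 + j) / (Nat.factorial (N1 + j) : ℝ)) *
    ∑ i ∈ Finset.range (N2 - j + 1), a2 ^ i / (Nat.factorial i : ℝ)


lemma erlangSum_pos (n : ℕ) (a : ℝ) (ha : 0 < a) :
    0 < ∑ i ∈ Finset.range (n + 1), a ^ i / (Nat.factorial i : ℝ) :=
  Finset.sum_pos (fun i _ => div_pos (pow_pos ha i)
    (by exact_mod_cast Nat.factorial_pos i)) ⟨0, by simp⟩

lemma key_lb (N : ℕ) (a : ℝ) (ha : 0 < a) (j : ℕ) (hj : 1 ≤ j) :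
    (1 - ((N : ℝ) + j) / a) * (∑ i ∈ Finset.range (N + 1), a ^ i / (Nat.factorial i : ℝ))
      < a ^ N / (Nat.factorial N : ℝ) := by
  set S := ∑ i ∈ Finset.range (N + 1), a ^ i / (Nat.factorial i : ℝ) with hSdef
  have hS : 0 < S := erlangSum_pos N a ha
  set B := ∑ k ∈ Finset.range N, a ^ (k + 1) / (Nat.factorial k : ℝ) with hBdef
  have hA : a * S = B + a * (a ^ N / (Nat.factorial N : ℝ)) := by
    rw [hSdef, Finset.mul_sum, Finset.sum_range_succ, hBdef]
    congr 1
    · apply Finset.sum_congr rfl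
      intro k _
      rw [pow_succ]
      ring
  have hS1 : S = (∑ k ∈ Finset.range N, a ^ (k + 1) / (Nat.factorial (k + 1) : ℝ)) + 1 := by
    rw [hSdef, Finset.sum_range_succ']
    simp
  have hB : B ≤ (N : ℝ) * (S - 1) := by
    rw [hS1]
    simp only [add_sub_cancel_right]
    rw [Finset.mul_sum, hBdef]
    apply Finset.sum_le_sum
    intro k hk
    have hk' : (k : ℝ) + 1 ≤ N := by
      exact_mod_cast Nat.succ_le_of_lt (Finset.mem_range.mp hk)
    have hfact : (Nat.factorial (k + 1) : ℝ) = ((k : ℝ) + 1) * (Nat.factorial k : ℝ) := by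
      rw [Nat.factorial_succ]; push_cast; ring
    have hf : (0:ℝ) < Nat.factorial k := by exact_mod_cast Nat.factorial_pos k
    rw [hfact]
    have heq : a ^ (k+1) / (Nat.factorial k : ℝ) = ((k:ℝ)+1) * (a ^ (k+1) / (((k:ℝ)+1) * Nat.factorial k)) := by
      field_simp
    rw [heq]
    gcongr
  have hj' : (1 : ℝ) ≤ (j : ℝ) := by exact_mod_cast hj
  have hjS : S ≤ (j : ℝ) * S := le_mul_of_one_le_left hS.le hj'
  rw [← mul_lt_mul_iff_of_pos_right ha]
  have hexp : (1 - ((N : ℝ) + j) / a) * S * a = a * S - ((N : ℝ) + j) * S := by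
    field_simp
  rw [hexp]
  have hN : (0:ℝ) ≤ N := Nat.cast_nonneg N
  nlinarith [hS, hB, hjS]

theorem key_inequality_v (N1 N2 : ℕ) (a1 a2 : ℝ) (ha1 : 0 < a1) (ha2 : 0 < a2) :
    (∀ j ∈ Finset.Icc 1 N2,
      coefV1 N1 N2 a1 a2 j * coefD N1 N2 a1 a2 - coefV N1 N2 a1 a2 j * coefM1 N1 N2 a1 a2 < 0) ∧
    (∀ j : ℕ, 1 ≤ j → 1 - ((N1 : ℝ) + j) / a1 < ErlangB N1 a1) := by
  have hEb : ∀ j : ℕ, 1 ≤ j → 1 - ((N1 : ℝ) + j) / a1 < ErlangB N1 a1 := by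
    intro j hj
    unfold ErlangB
    exact (lt_div_iff₀ (erlangSum_pos N1 a1 ha1)).mpr (key_lb N1 a1 ha1 j hj)
  refine ⟨?_, hEb⟩
  intro j hj
  obtain ⟨hj1, _⟩ := Finset.mem_Icc.mp hj
  have hkey := key_lb N1 a1 ha1 j hj1
  have hT' : 0 < a1 ^ (N1 + j) / (Nat.factorial (N1 + j) : ℝ) :=
    div_pos (pow_pos ha1 _) (by exact_mod_cast Nat.factorial_pos _)
  have hS2' : 0 < ∑ i ∈ Finset.range (N2 - j + 1), a2 ^ i / (Nat.factorial i : ℝ) :=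
    erlangSum_pos _ a2 ha2
  have hS2 : 0 < ∑ i ∈ Finset.range (N2 + 1), a2 ^ i / (Nat.factorial i : ℝ) :=
    erlangSum_pos _ a2 ha2
  have heq : coefV1 N1 N2 a1 a2 j * coefD N1 N2 a1 a2 - coefV N1 N2 a1 a2 j * coefM1 N1 N2 a1 a2
      = (a1 ^ (N1 + j) / (Nat.factorial (N1 + j) : ℝ) *
          (∑ i ∈ Finset.range (N2 - j + 1), a2 ^ i / (Nat.factorial i : ℝ)) *
          (∑ i ∈ Finset.range (N2 + 1), a2 ^ i / (Nat.factorial i : ℝ))) *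
        ((1 - ((N1 : ℝ) + j) / a1) * (∑ i ∈ Finset.range (N1 + 1), a1 ^ i / (Nat.factorial i : ℝ))
          - a1 ^ N1 / (Nat.factorial N1 : ℝ)) := by
    unfold coefV1 coefD coefV coefM1
    ring
  rw [heq]
  exact mul_neg_of_pos_of_neg (by positivity) (by linarith)
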